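/- Pumping lemma for energy parity games: let ρ = v₀v₁v₂⋯ be an infinite play consistent with a finite-state winning strategy σ of size s for Player 0 in an energy parity game with n vertices and largest absolute edge weight W, starting from a vertex from which σ is winning. Then every finite infix π of ρ satisfies w(π) > -(ns - 1)W - 1. -/
import Mathlib


open scoped BigOperators

variable {V M : Type*}

/-- An infinite play through the arena with edge relation `E`. -/
def IsPlay (E : V → V → Prop) (ρ : ℕ → V) : Prop := ∀ j, E (ρ j) (ρ (j + 1))

/-- The sequence of memory states of the memory structure `(M, init, upd)`
along the play `ρ`. -/
def memSeq (init : V → M) (upd : M → V → M) (ρ : ℕ → V) : ℕ → M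
  | 0 => init (ρ 0)
  | j + 1 => upd (memSeq init upd ρ j) (ρ (j + 1))

/-- Consistency of the play `ρ` with the finite-state strategy for Player 0
implemented by the memory structure `(M, init, upd)` and next-move function
`nxt`. -/
def ConsistentFS (V0 : Set V) (init : V → M) (upd : M → V → M)
    (nxt : V → M → V) (ρ : ℕ → V) : Prop :=
  ∀ j, ρ j ∈ V0 → ρ (j + 1) = nxt (ρ j) (memSeq init upd ρ j)

/-- The (max-) parity condition: the maximal color occurring infinitely often
is even. -/
def SatParity (Ω : V → ℕ) (ρ : ℕ → V) : Prop :=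
  ∃ c, Even c ∧ {j | Ω (ρ j) = c}.Infinite ∧ ∀ c' > c, {j | Ω (ρ j) = c'}.Finite

/-- The energy condition with initial credit `c₀`: the energy level of every
prefix is nonnegative. -/
def EnergyOK (w : V → V → ℤ) (c₀ : ℕ) (ρ : ℕ → V) : Prop :=
  ∀ j, 0 ≤ (c₀ : ℤ) + ∑ k ∈ Finset.range j, w (ρ k) (ρ (k + 1))

/-! ### Auxiliary material for the pumping argument -/

/-- Index function for the pumped play: follow `ρ` up to position `p`, then
cycle through the segment `[p, p+L)` forever. -/
def pIdx (p L k : ℕ) : ℕ := if k ≤ p then k else p + (k - p) % L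

/-- The pumped play. -/
def pumpPlay (ρ : ℕ → V) (p L : ℕ) : ℕ → V := fun k => ρ (pIdx p L k)

lemma pIdx_of_le {p L k : ℕ} (h : k ≤ p) : pIdx p L k = k := if_pos h

lemma pIdx_of_ge {p L k : ℕ} (h : p ≤ k) : pIdx p L k = p + (k - p) % L := by
  unfold pIdx
  rcases eq_or_lt_of_le h with h' | h'
  · simp [← h']
  · rw [if_neg (by omega)]

lemma pIdx_step {p L : ℕ} (hL : 0 < L) (k : ℕ) :
    pIdx p L (k + 1) = pIdx p L k + 1 ∨
      (pIdx p L k + 1 = p + L ∧ pIdx p L (k + 1) = p) := by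
  by_cases hk : k < p
  · left
    rw [pIdx_of_le hk.le, pIdx_of_le hk]
  · push_neg at hk
    have h1 : pIdx p L k = p + (k - p) % L := pIdx_of_ge hk
    have h2 : pIdx p L (k + 1) = p + (k + 1 - p) % L := pIdx_of_ge (by omega)
    have hr : (k - p) % L < L := Nat.mod_lt _ hL
    have h3 : k + 1 - p = (k - p) + 1 := by omega
    have h4 : ((k - p) + 1) % L = ((k - p) % L + 1) % L := (Nat.mod_add_mod _ _ _).symm
    rcases eq_or_lt_of_le (Nat.succ_le_of_lt hr) with he | hlt
    · right
      constructor
      · rw [h1]; omega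
      · rw [h2, h3, h4, show (k - p) % L + 1 = L from he, Nat.mod_self, Nat.add_zero]
    · left
      rw [h1, h2, h3, h4, Nat.mod_eq_of_lt hlt, Nat.add_assoc]

lemma pumpPlay_of_le {ρ : ℕ → V} {p L k : ℕ} (h : k ≤ p) :
    pumpPlay ρ p L k = ρ k := by
  rw [pumpPlay, pIdx_of_le h]

/-- The key pumping construction: if a play consistent with the strategy has a
repeat of (vertex, memory state) enclosing a negative-weight loop, then the
strategy is not winning (energy is violated on the pumped play). -/
lemma pump_false (V0 : Set V) (E : V → V → Prop) (w : V → V → ℤ)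
    (init : V → M) (upd : M → V → M) (nxt : V → M → V) (v0 : V) (c₀ : ℕ)
    (hwin : ∀ ρ, IsPlay E ρ → ρ 0 = v0 → ConsistentFS V0 init upd nxt ρ →
      EnergyOK w c₀ ρ)
    (ρ : ℕ → V) (hplay : IsPlay E ρ) (h0 : ρ 0 = v0)
    (hcons : ConsistentFS V0 init upd nxt ρ) (p q : ℕ) (hpq : p < q)
    (hv : ρ p = ρ q) (hmm : memSeq init upd ρ p = memSeq init upd ρ q)
    (hneg : ∑ k ∈ Finset.Ico p q, w (ρ k) (ρ (k + 1)) < 0) : False := by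
  set L := q - p with hLdef
  have hL : 0 < L := by omega
  have hq : q = p + L := by omega
  have hwrap : ρ (p + L) = ρ p := by rw [← hq, ← hv]
  have hρeq : ∀ k, pumpPlay ρ p L k = ρ (pIdx p L k) := fun k => rfl
  have hρstep : ∀ k, pumpPlay ρ p L (k + 1) = ρ (pIdx p L k + 1) := by
    intro k
    rcases pIdx_step hL k with h | ⟨h1, h2⟩
    · rw [hρeq, h]
    · rw [hρeq, h2, h1]
      exact hwrap.symm
  have hplay' : IsPlay E (pumpPlay ρ p L) := by
    intro k
    rw [hρeq k, hρstep k]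
    exact hplay _
  have h0' : pumpPlay ρ p L 0 = v0 := by
    rw [pumpPlay_of_le (Nat.zero_le p), h0]
  have hmem' : ∀ k, memSeq init upd (pumpPlay ρ p L) k = memSeq init upd ρ (pIdx p L k) := by
    intro k
    induction k with
    | zero =>
      show init (pumpPlay ρ p L 0) = memSeq init upd ρ (pIdx p L 0)
      rw [pumpPlay_of_le (Nat.zero_le p), pIdx_of_le (Nat.zero_le p)]
      rfl
    | succ k ih =>
      show upd (memSeq init upd (pumpPlay ρ p L) k) (pumpPlay ρ p L (k + 1)) = _
      rw [ih, hρstep k]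
      have e : upd (memSeq init upd ρ (pIdx p L k)) (ρ (pIdx p L k + 1)) =
          memSeq init upd ρ (pIdx p L k + 1) := rfl
      rw [e]
      rcases pIdx_step hL k with h | ⟨h1, h2⟩
      · rw [h]
      · rw [h1, h2, ← hq]
        exact hmm.symm
  have hcons' : ConsistentFS V0 init upd nxt (pumpPlay ρ p L) := by
    intro k hk
    rw [hρstep k, hmem' k]
    exact hcons _ hk
  have hE : EnergyOK w c₀ (pumpPlay ρ p L) := hwin _ hplay' h0' hcons'
  set c : ℤ := ∑ k ∈ Finset.Ico p q, w (ρ k) (ρ (k + 1)) with hc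
  set S : ℤ := ∑ k ∈ Finset.range p, w (ρ k) (ρ (k + 1)) with hS
  have hsum : ∀ T : ℕ,
      (∑ k ∈ Finset.range (p + T * L), w (pumpPlay ρ p L k) (pumpPlay ρ p L (k + 1)))
        = S + T * c := by
    intro T
    induction T with
    | zero =>
      simp only [Nat.zero_mul, Nat.add_zero, Nat.cast_zero, zero_mul, add_zero]
      rw [hS]
      apply Finset.sum_congr rfl
      intro k hk
      rw [Finset.mem_range] at hk
      rw [hρstep k, pIdx_of_le hk.le, pumpPlay_of_le hk.le]
    | succ T ih =>
      have hsplit : p + (T + 1) * L = (p + T * L) + L := by ring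
      rw [hsplit, Finset.sum_range_add, ih]
      have hinner : ∀ r ∈ Finset.range L,
          w (pumpPlay ρ p L (p + T * L + r)) (pumpPlay ρ p L (p + T * L + r + 1))
            = w (ρ (p + r)) (ρ (p + r + 1)) := by
        intro r hr
        rw [Finset.mem_range] at hr
        have hidx : pIdx p L (p + T * L + r) = p + r := by
          rw [pIdx_of_ge (by omega)]
          congr 1
          have h5 : p + T * L + r - p = r + T * L := by omega
          rw [h5, Nat.add_mul_mod_self_right, Nat.mod_eq_of_lt hr]
        rw [hρstep (p + T * L + r), hidx, hρeq (p + T * L + r), hidx]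
      rw [Finset.sum_congr rfl hinner]
      have hcr : ∑ r ∈ Finset.range L, w (ρ (p + r)) (ρ (p + r + 1)) = c := by
        rw [hc, Finset.sum_Ico_eq_sum_range]
      rw [hcr]
      push_cast
      ring
  have hcneg : c ≤ -1 := by omega
  set T : ℕ := (c₀ + S).toNat + 1 with hT
  have hE' := hE (p + T * L)
  rw [hsum T] at hE'
  have h1 : (c₀ : ℤ) + S < T := by
    have h2 := Int.self_le_toNat ((c₀ : ℤ) + S)
    rw [hT]
    push_cast
    omega
  have h3 : (T : ℤ) * c ≤ -(T : ℤ) := by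
    have h4 : (0 : ℤ) ≤ (T : ℤ) := Int.natCast_nonneg T
    nlinarith
  linarith

/-- pumping lemma for energy parity games. If `σ` is a
finite-state winning strategy (of size `s = card M`) for Player 0 from `v0`
(with some initial credit `c₀`) in an energy parity game with `n = card V`
vertices and largest absolute weight `W`, then every infix of every play that
starts in `v0` and is consistent with `σ` has weight `> -(ns - 1)W - 1`. -/
theorem energy_parity_pumping [Fintype V] [Fintype M]
    (V0 : Set V) (E : V → V → Prop) (Ω : V → ℕ) (w : V → V → ℤ) (W : ℕ)
    (init : V → M) (upd : M → V → M) (nxt : V → M → V) (v0 : V) (c₀ : ℕ)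
    (hW : ∀ u v, E u v → (w u v).natAbs ≤ W)
    (hwin : ∀ ρ, IsPlay E ρ → ρ 0 = v0 → ConsistentFS V0 init upd nxt ρ →
      SatParity Ω ρ ∧ EnergyOK w c₀ ρ)
    (ρ : ℕ → V) (hplay : IsPlay E ρ) (h0 : ρ 0 = v0)
    (hcons : ConsistentFS V0 init upd nxt ρ) (j j' : ℕ) (hj : j ≤ j') :
    -(((Fintype.card V * Fintype.card M : ℕ) : ℤ) - 1) * (W : ℤ) - 1 <
      ∑ k ∈ Finset.Ico j j', w (ρ k) (ρ (k + 1)) := by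
  classical
  by_contra hcon
  push_neg at hcon
  set N : ℕ := Fintype.card V * Fintype.card M with hN
  have hV : 0 < Fintype.card V := Fintype.card_pos_iff.mpr ⟨v0⟩
  have hM : 0 < Fintype.card M := Fintype.card_pos_iff.mpr ⟨init v0⟩
  have hN1 : 1 ≤ N := by
    rw [hN]; exact Nat.mul_pos hV hM
  set P : ℕ → ℤ := fun k => ∑ m ∈ Finset.range k, w (ρ m) (ρ (m + 1)) with hP
  have hPd : ∀ k, P k = ∑ m ∈ Finset.range k, w (ρ m) (ρ (m + 1)) := fun k => by
    simp only [hP]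
  have hPstep : ∀ k, P (k + 1) = P k + w (ρ k) (ρ (k + 1)) := fun k => by
    rw [hPd, hPd]; exact Finset.sum_range_succ _ _
  have hWstep : ∀ k, -(W : ℤ) ≤ w (ρ k) (ρ (k + 1)) := by
    intro k
    have := hW _ _ (hplay k)
    omega
  have hWnn : (0 : ℤ) ≤ (W : ℤ) := Int.natCast_nonneg W
  have hcon' : P j' ≤ P j - ((N : ℤ) - 1) * W - 1 := by
    have h := Finset.sum_Ico_eq_sub (fun m => w (ρ m) (ρ (m + 1))) hj
    rw [h] at hcon
    rw [hPd, hPd]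
    linarith
  set thr : ℕ → ℤ := fun i => if i = 0 then 0 else ((i : ℤ) - 1) * W + 1 with hthr
  have hthr0 : thr 0 = 0 := by simp [hthr]
  have hthr_pos : ∀ i, i ≠ 0 → thr i = ((i : ℤ) - 1) * W + 1 := fun i hi => by
    simp [hthr, hi]
  have hthr_mono : ∀ a b : ℕ, a ≤ b → thr a ≤ thr b := by
    intro a b hab
    by_cases ha : a = 0
    · subst ha
      rw [hthr0]
      by_cases hb : b = 0
      · subst hb; rw [hthr0]
      · rw [hthr_pos b hb]
        have h1 : (1 : ℤ) ≤ (b : ℤ) := by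
          exact_mod_cast Nat.one_le_iff_ne_zero.mpr hb
        nlinarith
    · have hb : b ≠ 0 := by omega
      rw [hthr_pos a ha, hthr_pos b hb]
      have h1 : (a : ℤ) ≤ (b : ℤ) := by exact_mod_cast hab
      nlinarith
  have hthr_le : ∀ i, i ≤ N → thr i ≤ ((N : ℤ) - 1) * W + 1 := by
    intro i hi
    have h := hthr_mono i N hi
    rwa [hthr_pos N (by omega)] at h
  have hex : ∀ i : Fin (N + 1), ∃ k, j ≤ k ∧ P k ≤ P j - thr i.val := by
    intro i
    refine ⟨j', hj, ?_⟩
    have := hthr_le i.val (Fin.is_le i)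
    linarith
  have hleast : ∀ i : Fin (N + 1), ∃ k, (j ≤ k ∧ P k ≤ P j - thr i.val) ∧
      ∀ k', k' < k → ¬ (j ≤ k' ∧ P k' ≤ P j - thr i.val) :=
    fun i => ⟨Nat.find (hex i), Nat.find_spec (hex i), fun k' h => Nat.find_min (hex i) h⟩
  choose x hx hxmin using hleast
  have hxmono : ∀ a b : Fin (N + 1), a ≤ b → x a ≤ x b := by
    intro a b hab
    by_contra hlt
    push_neg at hlt
    refine hxmin a (x b) hlt ⟨(hx b).1, le_trans (hx b).2 ?_⟩
    have h := hthr_mono a.val b.val hab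
    linarith
  have hLB : ∀ i : Fin (N + 1), P j - (i.val : ℤ) * W - 1 < P (x i) := by
    intro i
    rcases eq_or_lt_of_le (hx i).1 with he | hlt
    · rw [← he]
      have h1 : (0 : ℤ) ≤ (i.val : ℤ) * W := by positivity
      linarith
    · have hi0 : i.val ≠ 0 := by
        intro h
        refine hxmin i j hlt ⟨le_rfl, ?_⟩
        rw [h, hthr0]
        linarith
      obtain ⟨k, hk⟩ : ∃ k, x i = k + 1 := ⟨x i - 1, by omega⟩
      have hjk : j ≤ k := by omega
      have hmin := hxmin i k (by omega)
      push_neg at hmin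
      have h1 : P j - thr i.val < P k := hmin hjk
      have h2 : P (x i) = P k + w (ρ k) (ρ (k + 1)) := by rw [hk]; exact hPstep k
      have h3 := hWstep k
      rw [hthr_pos i.val hi0] at h1
      have h4 : ((i.val : ℤ) - 1) * W = (i.val : ℤ) * W - W := by ring
      linarith
  have hdec : ∀ a b : Fin (N + 1), a < b → P (x b) < P (x a) := by
    intro a b hab
    have hab' : a.val < b.val := hab
    have hb0 : b.val ≠ 0 := by omega
    have h1 : P (x b) ≤ P j - thr b.val := (hx b).2
    rw [hthr_pos b.val hb0] at h1
    have h2 : (a.val : ℤ) ≤ (b.val : ℤ) - 1 := by omega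
    have h3 : (a.val : ℤ) * W ≤ ((b.val : ℤ) - 1) * W :=
      mul_le_mul_of_nonneg_right h2 hWnn
    have h5 := hLB a
    linarith
  have hcard : Fintype.card (V × M) < Fintype.card (Fin (N + 1)) := by
    rw [Fintype.card_prod, Fintype.card_fin]
    omega
  obtain ⟨a, b, hne, hfab⟩ := Fintype.exists_ne_map_eq_of_card_lt
    (fun i : Fin (N + 1) => (ρ (x i), memSeq init upd ρ (x i))) hcard
  have key : ∀ a b : Fin (N + 1), a < b → ρ (x a) = ρ (x b) →
      memSeq init upd ρ (x a) = memSeq init upd ρ (x b) → False := by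
    intro a b hab hv hmm2
    have hpq : x a < x b := by
      refine lt_of_le_of_ne (hxmono a b hab.le) ?_
      intro h
      have hd := hdec a b hab
      rw [h] at hd
      exact lt_irrefl _ hd
    have hcyc : ∑ k ∈ Finset.Ico (x a) (x b), w (ρ k) (ρ (k + 1)) < 0 := by
      rw [Finset.sum_Ico_eq_sub (fun m => w (ρ m) (ρ (m + 1))) hpq.le]
      have hd := hdec a b hab
      rw [hPd, hPd] at hd
      linarith
    exact pump_false V0 E w init upd nxt v0 c₀
      (fun ρ₁ h1 h2 h3 => (hwin ρ₁ h1 h2 h3).2)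
      ρ hplay h0 hcons (x a) (x b) hpq hv hmm2 hcyc
  simp only [Prod.mk.injEq] at hfab
  rcases hne.lt_or_gt with h | h
  · exact key a b h hfab.1 hfab.2
  · exact key b a h hfab.1.symm hfab.2.symm
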